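/- (Higher derivative formula) For all natural numbers r, n, ν with ν ≤ r and ν ≤ n, and all real x, the ν-th derivative of the polynomial H_{r,n} satisfies (d^ν/dx^ν) H_{r,n}(x) = r!·n! · Σ_{j=0}^{ν} α_{j,ν} · H_{r−ν+j, n−j}(x) / ((r−ν+j)!·(n−j)!). -/

import Mathlib

open Polynomial Finset

/-- The operator `A p = 2·X·p − p′`. -/
noncomputable def A (p : ℝ[X]) : ℝ[X] := 2 * X * p - derivative p

/-- The two-index Hermite polynomial `H_{m,n} = A^m (X^n)`. -/
noncomputable def H (m n : ℕ) : ℝ[X] := A^[m] (X ^ n)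
/-- The coefficients `α_{j,ν}`: `α_{0,ν} = 2^ν`, `α_{ν,ν} = 1`, and
`α_{j,ν} = 2·α_{j,ν−1} + α_{j−1,ν−1}` for `1 ≤ j < ν`. -/
def alpha : ℕ → ℕ → ℕ
  | 0, ν => 2 ^ ν
  | _ + 1, 0 => 1
  | j + 1, ν + 1 =>
      if j + 1 = ν + 1 then 1 else 2 * alpha (j + 1) ν + alpha j ν



lemma A_add (p q : ℝ[X]) : A (p + q) = A p + A q := by
  simp [A]; ring

lemma A_C_mul (c : ℝ) (p : ℝ[X]) : A (C c * p) = C c * A p := by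
  simp [A]; ring

lemma iterA_add (m : ℕ) (p q : ℝ[X]) : A^[m] (p + q) = A^[m] p + A^[m] q := by
  induction m generalizing p q with
  | zero => simp
  | succ m ih => simp [Function.iterate_succ_apply, A_add, ih]

lemma iterA_C_mul (m : ℕ) (c : ℝ) (p : ℝ[X]) : A^[m] (C c * p) = C c * A^[m] p := by
  induction m generalizing p with
  | zero => simp
  | succ m ih => simp [Function.iterate_succ_apply, A_C_mul, ih]

lemma C2 : (C 2 : ℝ[X]) = 2 := by
  rw [show (2:ℝ) = ((2:ℕ):ℝ) by norm_num, C_eq_natCast]; norm_num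

lemma deriv_A (p : ℝ[X]) : derivative (A p) = 2 * p + A (derivative p) := by
  simp [A]; ring

lemma deriv_iterA (m : ℕ) (p : ℝ[X]) :
    derivative (A^[m+1] p) = C (2*(m+1) : ℝ) * A^[m] p + A^[m+1] (derivative p) := by
  induction m generalizing p with
  | zero => rw [Function.iterate_one, deriv_A]; norm_num [C2]
  | succ m ih =>
      rw [Function.iterate_succ_apply, ih (A p), deriv_A, iterA_add,
        show (2:ℝ[X]) * p = C 2 * p by rw [C2], iterA_C_mul,
        ← Function.iterate_succ_apply, ← Function.iterate_succ_apply]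
      push_cast
      rw [show (C (2*((m:ℝ)+1+1)) : ℝ[X]) = C (2*((m:ℝ)+1)) + C 2 by rw [← C_add]; ring_nf]
      ring

lemma deriv_H (m n : ℕ) :
    derivative (H m n) = C (2*m : ℝ) * H (m-1) n + C (n : ℝ) * H m (n-1) := by
  cases m with
  | zero => simp [H, derivative_X_pow]
  | succ m =>
      unfold H
      rw [deriv_iterA, derivative_X_pow, iterA_C_mul]
      push_cast
      ring

lemma alpha_self (ν : ℕ) : alpha ν ν = 1 := by
  cases ν with
  | zero => simp [alpha]
  | succ k => simp [alpha]

lemma alpha_succ (j ν : ℕ) (hj : j ≤ ν + 1) :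
    alpha j (ν+1) = (if j ≤ ν then 2 * alpha j ν else 0) +
      (if 1 ≤ j then alpha (j-1) ν else 0) := by
  match j with
  | 0 => simp [alpha, pow_succ]; ring
  | k + 1 =>
      by_cases h : k + 1 = ν + 1
      · have : ¬ (k + 1 ≤ ν) := by omega
        simp [alpha, h, this, show k = ν by omega, alpha_self]
      · have hle : k + 1 ≤ ν := by omega
        simp [alpha, h, hle, show k ≠ ν by omega]

lemma iter_deriv_add (k : ℕ) (p q : ℝ[X]) :
    derivative^[k] (p + q) = derivative^[k] p + derivative^[k] q := by
  induction k generalizing p q with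
  | zero => simp
  | succ k ih => simp [Function.iterate_succ_apply, derivative_add, ih]

theorem hmn_higher_derivative (r n ν : ℕ) (hr : ν ≤ r) (hn : ν ≤ n) (x : ℝ) :
    (derivative^[ν] (H r n)).eval x =
      (r.factorial : ℝ) * (n.factorial : ℝ) *
        ∑ j ∈ range (ν + 1),
          (alpha j ν : ℝ) * (H (r - ν + j) (n - j)).eval x /
            (((r - ν + j).factorial : ℝ) * ((n - j).factorial : ℝ)) := by
  induction ν generalizing r n with
  | zero =>
      simp only [Function.iterate_zero, id, Finset.sum_range_one, Nat.sub_zero,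
        Nat.add_zero, alpha, pow_zero, Nat.cast_one, one_mul]
      have h1 : (r.factorial : ℝ) ≠ 0 := Nat.cast_ne_zero.2 r.factorial_ne_zero
      have h2 : (n.factorial : ℝ) ≠ 0 := Nat.cast_ne_zero.2 n.factorial_ne_zero
      field_simp
      simp [alpha]
      rw [mul_div_left_comm, div_self (mul_ne_zero h1 h2), mul_one]
  | succ ν ih =>
      have hrfac : (r : ℝ) * (r-1).factorial = r.factorial := by
        exact_mod_cast congrArg (Nat.cast : ℕ → ℝ) (Nat.mul_factorial_pred (by omega))
      have hnfac : (n : ℝ) * (n-1).factorial = n.factorial := by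
        exact_mod_cast congrArg (Nat.cast : ℕ → ℝ) (Nat.mul_factorial_pred (by omega))
      rw [Function.iterate_succ_apply, deriv_H]
      simp only [iter_deriv_add, iterate_derivative_C_mul, eval_add, eval_mul, eval_C]
      rw [ih (r-1) n (by omega) (by omega), ih r (n-1) (by omega) (by omega)]
      have split :
          ∑ j ∈ range (ν + 1 + 1),
              (alpha j (ν+1) : ℝ) * (H (r - (ν+1) + j) (n - j)).eval x /
                (((r - (ν+1) + j).factorial : ℝ) * ((n - j).factorial : ℝ))
          = (∑ j ∈ range (ν + 1),
              (2 * alpha j ν : ℝ) * (H (r - (ν+1) + j) (n - j)).eval x /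
                (((r - (ν+1) + j).factorial : ℝ) * ((n - j).factorial : ℝ)))
          + ∑ j ∈ range (ν + 1),
              (alpha j ν : ℝ) * (H (r - (ν+1) + (j+1)) (n - (j+1))).eval x /
                (((r - (ν+1) + (j+1)).factorial : ℝ) * ((n - (j+1)).factorial : ℝ)) := by
        have step : ∀ j ∈ range (ν + 1 + 1),
            (alpha j (ν+1) : ℝ) * (H (r - (ν+1) + j) (n - j)).eval x /
                (((r - (ν+1) + j).factorial : ℝ) * ((n - j).factorial : ℝ))
            = ((if j ≤ ν then 2 * alpha j ν else 0 : ℕ) : ℝ) * (H (r - (ν+1) + j) (n - j)).eval x /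
                (((r - (ν+1) + j).factorial : ℝ) * ((n - j).factorial : ℝ))
            + ((if 1 ≤ j then alpha (j-1) ν else 0 : ℕ) : ℝ) * (H (r - (ν+1) + j) (n - j)).eval x /
                (((r - (ν+1) + j).factorial : ℝ) * ((n - j).factorial : ℝ)) := by
          intro j hj
          rw [alpha_succ j ν (by simpa using Nat.lt_succ_iff.1 (mem_range.1 hj))]
          push_cast
          ring
        rw [Finset.sum_congr rfl step, Finset.sum_add_distrib]
        congr 1
        · rw [Finset.sum_range_succ]
          simp only [show ¬ (ν + 1 ≤ ν) by omega, if_false, Nat.cast_zero, zero_mul, zero_div,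
            add_zero]
          exact Finset.sum_congr rfl fun j hj => by
            rw [if_pos (Nat.lt_succ_iff.1 (mem_range.1 hj))]; push_cast; ring
        · rw [Finset.sum_range_succ']
          simp only [show ¬ (1 ≤ 0) by omega, if_false, Nat.cast_zero, zero_mul, zero_div,
            add_zero]
          exact Finset.sum_congr rfl fun j hj => by
            rw [if_pos (by omega : 1 ≤ j + 1)]; simp
      rw [split, mul_add]
      congr 1
      · simp only [Finset.mul_sum]
        refine Finset.sum_congr rfl fun j hj => ?_
        rw [show r - 1 - ν + j = r - (ν+1) + j by omega, ← hrfac]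
        push_cast
        ring
      · simp only [Finset.mul_sum]
        refine Finset.sum_congr rfl fun j hj => ?_
        rw [show r - ν + j = r - (ν+1) + (j+1) by omega,
          show n - 1 - j = n - (j+1) by omega, ← hnfac]
        push_cast
        ring
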